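/- arXiv:2112.11406 — 3 statements merged into one kernel-verified Lean document; each statement's English description precedes it below -/
import Mathlib

section
/- Let (A*, R*) ∈ C_A × C_R be a partial optimum of J on C_A × C_R, i.e. J(A*, R*) ≤ J(A, R*) for all A ∈ C_A and J(A*, R*) ≤ J(A*, R) for all R ∈ C_R. Let U(R*) = {A ∈ C_A : J(A, R*) ≤ J(A', R*) for all A' ∈ C_A} and V(A*) = {R ∈ C_R : J(A*, R) ≤ J(A*, R') for all R' ∈ C_R}. If (A*, R*) is a local minimum of J on C_A × C_R, then J(A*, R*) ≤ J(A, R) for all A ∈ U(R*) and R ∈ V(A*). -/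
open Matrix

/-- The feasible set for the material maps. -/
def adjustCA (N M : ℕ) : Set (Matrix (Fin N) (Fin M) ℝ) :=
  {X | (∀ i j, 0 ≤ X i j) ∧ ∀ i, (∑ j, X i j) ≤ 1}

/-- The feasible set for the dictionary coefficients. -/
def adjustCR (M D : ℕ) : Set (Matrix (Fin M) (Fin D) ℝ) :=
  {X | (∀ i j, 0 ≤ X i j) ∧ (∀ i, (∑ j, X i j) ≤ 1) ∧ ∀ j, (∑ i, X i j) ≤ 1}

/-- The ADJUST objective `J(A,R) = (1/2)‖Y − W·A·R·T‖_F²` with `‖X‖_F² = Tr(XᵀX)`. -/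
noncomputable def adjustJ {N M D C J : ℕ}
    (W : Matrix (Fin J) (Fin N) ℝ) (T : Matrix (Fin D) (Fin C) ℝ)
    (Y : Matrix (Fin J) (Fin C) ℝ)
    (A : Matrix (Fin N) (Fin M) ℝ) (R : Matrix (Fin M) (Fin D) ℝ) : ℝ :=
  (1 / 2) * Matrix.trace ((Y - W * A * R * T)ᵀ * (Y - W * A * R * T))

lemma adjust_quadKey (c0 c1 c2 e : ℝ) (hc2 : 0 ≤ c2) (he : 0 < e) (he1 : e ≤ 1)
    (h : c0 ≤ c0 + c1*e + c2*e^2) : c0 ≤ c0 + c1*1 + c2*1^2 := by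
  nlinarith [mul_nonneg (mul_nonneg hc2 he.le) (sub_nonneg.2 he1)]

lemma adjust_trNonneg {m n : ℕ} (Q : Matrix (Fin m) (Fin n) ℝ) :
    0 ≤ Matrix.trace (Qᵀ * Q) := by
  simp only [Matrix.trace, Matrix.diag, Matrix.mul_apply, Matrix.transpose_apply]
  exact Finset.sum_nonneg fun j _ => Finset.sum_nonneg fun i _ => mul_self_nonneg _

lemma adjust_quadExp {J C : ℕ} (E Q : Matrix (Fin J) (Fin C) ℝ) (s : ℝ) :
    (1/2 : ℝ) * Matrix.trace ((E - s•Q)ᵀ * (E - s•Q)) =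
      (1/2) * Matrix.trace (Eᵀ*E) +
      (-(1/2)*(Matrix.trace (Eᵀ*Q) + Matrix.trace (Qᵀ*E)))*s +
      ((1/2)*Matrix.trace (Qᵀ*Q))*s^2 := by
  simp only [Matrix.transpose_sub, Matrix.transpose_smul, Matrix.sub_mul, Matrix.mul_sub,
    Matrix.smul_mul, Matrix.mul_smul, Matrix.trace_sub, Matrix.trace_smul, smul_smul,
    smul_eq_mul]
  ring

lemma adjust_expandA {N M D C J : ℕ} (W : Matrix (Fin J) (Fin N) ℝ)
    (T : Matrix (Fin D) (Fin C) ℝ) (Y : Matrix (Fin J) (Fin C) ℝ)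
    (A0 u : Matrix (Fin N) (Fin M) ℝ) (R : Matrix (Fin M) (Fin D) ℝ) :
    ∃ c1 c2 : ℝ, 0 ≤ c2 ∧ ∀ s : ℝ,
      adjustJ W T Y (A0 + s • u) R = adjustJ W T Y A0 R + c1*s + c2*s^2 := by
  set E := Y - W * A0 * R * T with hE
  set Q := W * u * R * T with hQ
  refine ⟨-(1/2)*(Matrix.trace (Eᵀ*Q) + Matrix.trace (Qᵀ*E)), (1/2)*Matrix.trace (Qᵀ*Q),
    by have := adjust_trNonneg Q; linarith, ?_⟩
  intro s
  have hres : Y - W * (A0 + s • u) * R * T = E - s • Q := by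
    simp only [hE, hQ, Matrix.mul_add, Matrix.add_mul, Matrix.mul_smul, Matrix.smul_mul]
    abel
  rw [adjustJ, adjustJ, hres, ← hE]
  exact adjust_quadExp E Q s

lemma adjust_expandR {N M D C J : ℕ} (W : Matrix (Fin J) (Fin N) ℝ)
    (T : Matrix (Fin D) (Fin C) ℝ) (Y : Matrix (Fin J) (Fin C) ℝ)
    (A : Matrix (Fin N) (Fin M) ℝ) (R0 v : Matrix (Fin M) (Fin D) ℝ) :
    ∃ c1 c2 : ℝ, 0 ≤ c2 ∧ ∀ t : ℝ,
      adjustJ W T Y A (R0 + t • v) = adjustJ W T Y A R0 + c1*t + c2*t^2 := by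
  set E := Y - W * A * R0 * T with hE
  set Q := W * A * v * T with hQ
  refine ⟨-(1/2)*(Matrix.trace (Eᵀ*Q) + Matrix.trace (Qᵀ*E)), (1/2)*Matrix.trace (Qᵀ*Q),
    by have := adjust_trNonneg Q; linarith, ?_⟩
  intro t
  have hres : Y - W * A * (R0 + t • v) * T = E - t • Q := by
    simp only [hE, hQ, Matrix.mul_add, Matrix.add_mul, Matrix.mul_smul, Matrix.smul_mul]
    abel
  rw [adjustJ, adjustJ, hres, ← hE]
  exact adjust_quadExp E Q t

lemma adjust_memCA {N M : ℕ} {A0 A : Matrix (Fin N) (Fin M) ℝ}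
    (h0 : A0 ∈ adjustCA N M) (h1 : A ∈ adjustCA N M) {s : ℝ} (hs : 0 ≤ s) (hs1 : s ≤ 1) :
    A0 + s • (A - A0) ∈ adjustCA N M := by
  constructor
  · intro i j
    simp only [Matrix.add_apply, Matrix.smul_apply, Matrix.sub_apply, smul_eq_mul]
    nlinarith [h0.1 i j, h1.1 i j]
  · intro i
    have : ∑ j, (A0 + s • (A - A0)) i j = (∑ j, A0 i j) + s * ((∑ j, A i j) - ∑ j, A0 i j) := by
      simp only [Matrix.add_apply, Matrix.smul_apply, Matrix.sub_apply, smul_eq_mul,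
        mul_sub, Finset.sum_add_distrib, Finset.sum_sub_distrib, ← Finset.mul_sum]
    rw [this]
    nlinarith [h0.2 i, h1.2 i]

lemma adjust_memCR {M D : ℕ} {R0 R : Matrix (Fin M) (Fin D) ℝ}
    (h0 : R0 ∈ adjustCR M D) (h1 : R ∈ adjustCR M D) {s : ℝ} (hs : 0 ≤ s) (hs1 : s ≤ 1) :
    R0 + s • (R - R0) ∈ adjustCR M D := by
  refine ⟨?_, ?_, ?_⟩
  · intro i j
    simp only [Matrix.add_apply, Matrix.smul_apply, Matrix.sub_apply, smul_eq_mul]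
    nlinarith [h0.1 i j, h1.1 i j]
  · intro i
    have : ∑ j, (R0 + s • (R - R0)) i j = (∑ j, R0 i j) + s * ((∑ j, R i j) - ∑ j, R0 i j) := by
      simp only [Matrix.add_apply, Matrix.smul_apply, Matrix.sub_apply, smul_eq_mul,
        mul_sub, Finset.sum_add_distrib, Finset.sum_sub_distrib, ← Finset.mul_sum]
    rw [this]
    nlinarith [h0.2.1 i, h1.2.1 i]
  · intro j
    have : ∑ i, (R0 + s • (R - R0)) i j = (∑ i, R0 i j) + s * ((∑ i, R i j) - ∑ i, R0 i j) := by
      simp only [Matrix.add_apply, Matrix.smul_apply, Matrix.sub_apply, smul_eq_mul,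
        mul_sub, Finset.sum_add_distrib, Finset.sum_sub_distrib, ← Finset.mul_sum]
    rw [this]
    nlinarith [h0.2.2 j, h1.2.2 j]

set_option maxHeartbeats 1000000 in
/-- If a partial optimum `(A*, R*)` of `J` on `C_A × C_R` is a local minimum of `J` on
`C_A × C_R`, then `J(A*,R*) ≤ J(A,R)` for all `A ∈ U(R*)` and `R ∈ V(A*)`, where `U(R*)`
(resp. `V(A*)`) is the set of minimizers of `J(·,R*)` over `C_A` (resp. of `J(A*,·)` over
`C_R`). -/
theorem partial_optimum_local_min (N M D C J : ℕ)
    (hN : 0 < N) (hM : 0 < M) (hD : 0 < D) (hC : 0 < C) (hJ : 0 < J)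
    (W : Matrix (Fin J) (Fin N) ℝ) (T : Matrix (Fin D) (Fin C) ℝ)
    (Y : Matrix (Fin J) (Fin C) ℝ)
    (Astar : Matrix (Fin N) (Fin M) ℝ) (Rstar : Matrix (Fin M) (Fin D) ℝ)
    (hAstar : Astar ∈ adjustCA N M) (hRstar : Rstar ∈ adjustCR M D)
    (hpartA : ∀ A ∈ adjustCA N M, adjustJ W T Y Astar Rstar ≤ adjustJ W T Y A Rstar)
    (hpartR : ∀ R ∈ adjustCR M D, adjustJ W T Y Astar Rstar ≤ adjustJ W T Y Astar R)
    (hloc : IsLocalMinOn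
        (fun p : Matrix (Fin N) (Fin M) ℝ × Matrix (Fin M) (Fin D) ℝ =>
          adjustJ W T Y p.1 p.2)
        (adjustCA N M ×ˢ adjustCR M D) (Astar, Rstar)) :
    ∀ A ∈ {A ∈ adjustCA N M | ∀ A' ∈ adjustCA N M,
        adjustJ W T Y A Rstar ≤ adjustJ W T Y A' Rstar},
      ∀ R ∈ {R ∈ adjustCR M D | ∀ R' ∈ adjustCR M D,
          adjustJ W T Y Astar R ≤ adjustJ W T Y Astar R'},
        adjustJ W T Y Astar Rstar ≤ adjustJ W T Y A R := by
  intro A hA R hR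
  obtain ⟨hAmem, hAmin⟩ := hA
  obtain ⟨hRmem, hRmin⟩ := hR
  set Jstar := adjustJ W T Y Astar Rstar with hJstar
  -- J(A, R*) = J*
  have hAR : adjustJ W T Y A Rstar = Jstar :=
    le_antisymm (hAmin Astar hAstar) (hpartA A hAmem)
  -- J(A*, R) = J*
  have hRR : adjustJ W T Y Astar R = Jstar :=
    le_antisymm (hRmin Rstar hRstar) (hpartR R hRmem)
  -- the path
  have hu : A - Astar = A - Astar := rfl
  set u := A - Astar with hu2
  set v := R - Rstar with hv
  -- extract a small ε > 0 from the local minimum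
  have hmem : ∀ᶠ x in nhdsWithin (Astar, Rstar) (adjustCA N M ×ˢ adjustCR M D),
      (fun p : Matrix (Fin N) (Fin M) ℝ × Matrix (Fin M) (Fin D) ℝ =>
          adjustJ W T Y p.1 p.2) (Astar, Rstar) ≤
      (fun p : Matrix (Fin N) (Fin M) ℝ × Matrix (Fin M) (Fin D) ℝ =>
          adjustJ W T Y p.1 p.2) x := hloc
  rw [Filter.eventually_iff] at hmem
  obtain ⟨U, hUmem, hUsub⟩ := mem_nhdsWithin_iff_exists_mem_nhds_inter.mp hmem
  have hpcont : Continuous (fun τ : ℝ =>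
      ((Astar + τ • u, Rstar + τ • v) :
        Matrix (Fin N) (Fin M) ℝ × Matrix (Fin M) (Fin D) ℝ)) := by
    exact (continuous_const.add (continuous_id.smul continuous_const)).prodMk
      (continuous_const.add (continuous_id.smul continuous_const))
  have hpre : (fun τ : ℝ => ((Astar + τ • u, Rstar + τ • v) :
      Matrix (Fin N) (Fin M) ℝ × Matrix (Fin M) (Fin D) ℝ)) ⁻¹' U ∈ nhds (0 : ℝ) := by
    apply hpcont.continuousAt.preimage_mem_nhds
    have : ((Astar + (0:ℝ) • u, Rstar + (0:ℝ) • v) :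
        Matrix (Fin N) (Fin M) ℝ × Matrix (Fin M) (Fin D) ℝ) = (Astar, Rstar) := by
      simp
    rw [this]
    exact hUmem
  obtain ⟨η, hη, hball⟩ := Metric.mem_nhds_iff.mp hpre
  set ε : ℝ := min (η/2) 1 with hε
  have hε0 : 0 < ε := lt_min (by linarith) one_pos
  have hε1 : ε ≤ 1 := min_le_right _ _
  have hεball : ε ∈ Metric.ball (0:ℝ) η := by
    simp only [Metric.mem_ball, Real.dist_eq, sub_zero, abs_of_pos hε0]
    calc ε ≤ η/2 := min_le_left _ _
      _ < η := by linarith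
  -- the point at parameter ε is in the feasible set
  have hAε : Astar + ε • u ∈ adjustCA N M := adjust_memCA hAstar hAmem hε0.le hε1
  have hRε : Rstar + ε • v ∈ adjustCR M D := adjust_memCR hRstar hRmem hε0.le hε1
  -- the local-min inequality at the point
  have hUε : ((Astar + ε • u, Rstar + ε • v) :
      Matrix (Fin N) (Fin M) ℝ × Matrix (Fin M) (Fin D) ℝ) ∈ U := hball hεball
  have hlocε : Jstar ≤ adjustJ W T Y (Astar + ε • u) (Rstar + ε • v) := by
    have hx := hUsub (Set.mem_inter hUε (Set.mk_mem_prod hAε hRε))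
    simpa using hx
  -- Step 1 : J(A*, R_ε) = J*
  obtain ⟨d1, d2, hd2, hdq⟩ := adjust_expandR W T Y Astar Rstar v
  have hq1 : adjustJ W T Y Astar (Rstar + (1:ℝ) • v) = Jstar + d1*1 + d2*1^2 := hdq 1
  have hv1 : Rstar + (1:ℝ) • v = R := by simp [hv]
  have hd12 : d1 + d2 = 0 := by
    rw [hv1] at hq1
    rw [hRR] at hq1
    linarith [hq1]
  have hRεval : adjustJ W T Y Astar (Rstar + ε • v) = Jstar := by
    have hle : adjustJ W T Y Astar (Rstar + ε • v) ≤ Jstar := by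
      rw [hdq ε]
      nlinarith [mul_nonneg hd2 (mul_nonneg hε0.le (sub_nonneg.2 hε1))]
    exact le_antisymm hle (hpartR _ hRε)
  -- Step 2 : along A-direction at fixed R_ε : J(A, R_ε) ≥ J*
  obtain ⟨c1, c2, hc2, hcq⟩ := adjust_expandA W T Y Astar u (Rstar + ε • v)
  have hstep2 : Jstar ≤ adjustJ W T Y (Astar + (1:ℝ) • u) (Rstar + ε • v) := by
    have h0 := hlocε
    rw [hcq ε, hRεval] at h0
    have hk := adjust_quadKey Jstar c1 c2 ε hc2 hε0 hε1 h0
    rw [hcq 1, hRεval]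
    exact hk
  have hu1 : Astar + (1:ℝ) • u = A := by simp [hu2]
  rw [hu1] at hstep2
  -- Step 3 : along R-direction at fixed A : J(A, R) ≥ J*
  obtain ⟨e1, e2, he2, heq⟩ := adjust_expandR W T Y A Rstar v
  have hk0 : adjustJ W T Y A Rstar = Jstar := hAR
  have hstep3 : Jstar ≤ adjustJ W T Y A (Rstar + (1:ℝ) • v) := by
    rw [heq 1, hk0]
    have hkε : Jstar ≤ adjustJ W T Y A (Rstar + ε • v) := hstep2
    rw [heq ε, hk0] at hkε
    have := adjust_quadKey Jstar e1 e2 ε he2 hε0 hε1 hkε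
    linarith [this]
  rw [hv1] at hstep3
  exact hstep3
end

section
/- Let E be a real Hilbert space, C₁, C₂ ⊆ E nonempty closed convex sets, and Z ∈ E. Define G(X, Y) = (1/2)‖X − Z‖² + (1/2)‖X − Y‖². Then (X*, Y*) ∈ C₁ × C₂ minimizes G over C₁ × C₂ if and only if X* = proj_{C₁}((Z + Y*)/2) and Y* = proj_{C₂}(X*); in particular, at any minimizer, Y* is a fixed point of the map Y ↦ proj_{C₂}(proj_{C₁}((Z + Y)/2)). -/
open RealInnerProductSpace

private lemma expand_G {E : Type*} [NormedAddCommGroup E] [InnerProductSpace ℝ E]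
    (Z Xs Ys X Y : E) :
    ((1/2)*‖X-Z‖^2 + (1/2)*‖X-Y‖^2) - ((1/2)*‖Xs-Z‖^2 + (1/2)*‖Xs-Ys‖^2)
    = -2*⟪(2:ℝ)⁻¹•(Z+Ys) - Xs, X-Xs⟫ - ⟪Xs-Ys, Y-Ys⟫
      + (1/2)*‖X-Xs‖^2 + (1/2)*‖(X-Xs)-(Y-Ys)‖^2 := by
  simp only [← real_inner_self_eq_norm_sq, inner_sub_left, inner_sub_right,
    inner_add_left, inner_add_right, inner_smul_left, inner_smul_right,
    conj_trivial, real_inner_comm Z X, real_inner_comm Y X, real_inner_comm Z Xs,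
    real_inner_comm Ys Xs, real_inner_comm Ys X, real_inner_comm Ys Y,
    real_inner_comm Xs Y, real_inner_comm Xs X, real_inner_comm Z Y, real_inner_comm Z Ys]
  ring

private lemma quad_id {E : Type*} [NormedAddCommGroup E] [InnerProductSpace ℝ E]
    (Z Y X : E) :
    (1/2)*‖X-Z‖^2 + (1/2)*‖X-Y‖^2 - ‖(2:ℝ)⁻¹•(Z+Y) - X‖^2
    = (1/2)*‖Z‖^2 + (1/2)*‖Y‖^2 - ‖(2:ℝ)⁻¹•(Z+Y)‖^2 := by
  simp only [← real_inner_self_eq_norm_sq, inner_sub_left, inner_sub_right,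
    inner_add_left, inner_add_right, inner_smul_left, inner_smul_right,
    conj_trivial, real_inner_comm Z X, real_inner_comm Y X, real_inner_comm Z Y]
  ring

private lemma ptwise_inner_char {E : Type*} [NormedAddCommGroup E] [InnerProductSpace ℝ E]
    {K : Set E} (h : Convex ℝ K) {u v : E} (hv : v ∈ K) :
    (∀ w ∈ K, ‖u - v‖ ≤ ‖u - w‖) ↔ ∀ w ∈ K, ⟪u - v, w - v⟫ ≤ 0 := by
  rw [← norm_eq_iInf_iff_real_inner_le_zero h hv]
  letI : Nonempty K := ⟨⟨v, hv⟩⟩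
  have hbdd : BddBelow (Set.range fun w : K => ‖u - w‖) :=
    ⟨0, fun _ ⟨w, hw⟩ => hw ▸ norm_nonneg _⟩
  constructor
  · intro hp
    exact le_antisymm (le_ciInf fun w => hp w w.2) (ciInf_le hbdd ⟨v, hv⟩)
  · intro he w hw
    rw [he]
    exact ciInf_le hbdd ⟨w, hw⟩

/-- In a real Hilbert space, `(X*, Y*) ∈ C₁ × C₂` minimizes
`G(X,Y) = (1/2)‖X − Z‖² + (1/2)‖X − Y‖²` over `C₁ × C₂` if and only if `X*` is the metric
projection of `(Z + Y*)/2` onto `C₁` and `Y*` is the metric projection of `X*` onto `C₂`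
(projections expressed by their closest-point characterization); in particular `Y*` is a
fixed point of `Y ↦ proj_{C₂}(proj_{C₁}((Z + Y)/2))`. -/
theorem min_iff_projections
    {E : Type*} [NormedAddCommGroup E] [InnerProductSpace ℝ E] [CompleteSpace E]
    (C₁ C₂ : Set E)
    (h1ne : C₁.Nonempty) (h1closed : IsClosed C₁) (h1conv : Convex ℝ C₁)
    (h2ne : C₂.Nonempty) (h2closed : IsClosed C₂) (h2conv : Convex ℝ C₂)
    (Z Xstar Ystar : E) (hX : Xstar ∈ C₁) (hY : Ystar ∈ C₂) :
    (∀ X ∈ C₁, ∀ Y ∈ C₂,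
        (1 / 2) * ‖Xstar - Z‖ ^ 2 + (1 / 2) * ‖Xstar - Ystar‖ ^ 2 ≤
          (1 / 2) * ‖X - Z‖ ^ 2 + (1 / 2) * ‖X - Y‖ ^ 2) ↔
      ((∀ w ∈ C₁, ‖(2:ℝ)⁻¹ • (Z + Ystar) - Xstar‖ ≤ ‖(2:ℝ)⁻¹ • (Z + Ystar) - w‖) ∧
       (∀ w ∈ C₂, ‖Xstar - Ystar‖ ≤ ‖Xstar - w‖)) := by
  constructor
  · intro hmin
    constructor
    · intro w hw
      have h1 := hmin w hw Ystar hY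
      have e1 := quad_id Z Ystar Xstar
      have e2 := quad_id Z Ystar w
      have hsq : ‖(2:ℝ)⁻¹ • (Z + Ystar) - Xstar‖ ^ 2 ≤ ‖(2:ℝ)⁻¹ • (Z + Ystar) - w‖ ^ 2 := by
        linarith
      nlinarith [norm_nonneg ((2:ℝ)⁻¹ • (Z + Ystar) - Xstar),
        norm_nonneg ((2:ℝ)⁻¹ • (Z + Ystar) - w)]
    · intro w hw
      have h1 := hmin Xstar hX w hw
      have hsq : ‖Xstar - Ystar‖ ^ 2 ≤ ‖Xstar - w‖ ^ 2 := by linarith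
      nlinarith [norm_nonneg (Xstar - Ystar), norm_nonneg (Xstar - w)]
  · rintro ⟨hA, hB⟩ X hXm Y hYm
    have hA' := (ptwise_inner_char h1conv hX).mp hA X hXm
    have hB' := (ptwise_inner_char h2conv hY).mp hB Y hYm
    have e := expand_G Z Xstar Ystar X Y
    nlinarith [sq_nonneg ‖X - Xstar‖, sq_nonneg ‖(X - Xstar) - (Y - Ystar)‖]
end

section
/- Let S = {x ∈ ℝ^M : x_j ≥ 0 for all j, and ∑_{j=1}^M x_j ≤ 1} and let z ∈ ℝ^M. Suppose λ* ≥ 0 satisfies ∑_{j=1}^M max(z_j − λ*, 0) ≤ 1 together with the complementarity condition λ* · (∑_{j=1}^M max(z_j − λ*, 0) − 1) = 0. Then the vector x* with entries x*_j = max(z_j − λ*, 0) is the Euclidean metric projection of z onto S, i.e. the unique point of S minimizing the Euclidean distance to z. -/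
/-- Projection onto the simplex-type set `S = {x ∈ ℝ^M : x ≥ 0, ∑ⱼ xⱼ ≤ 1}`: if `λ* ≥ 0`
satisfies `∑ⱼ max(zⱼ − λ*, 0) ≤ 1` and the complementarity condition
`λ*·(∑ⱼ max(zⱼ − λ*, 0) − 1) = 0`, then the vector `x*` with entries
`x*ⱼ = max(zⱼ − λ*, 0)` is the (unique) Euclidean metric projection of `z` onto `S`. -/
theorem simplex_projection_formula (M : ℕ) (hM : 0 < M)
    (z : EuclideanSpace ℝ (Fin M)) (lam : ℝ) (hlam : 0 ≤ lam)
    (hfeas : (∑ j, max (z j - lam) 0) ≤ 1)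
    (hcomp : lam * ((∑ j, max (z j - lam) 0) - 1) = 0) :
    ∀ xstar : EuclideanSpace ℝ (Fin M), (∀ j, xstar j = max (z j - lam) 0) →
      ((∀ j, 0 ≤ xstar j) ∧ (∑ j, xstar j) ≤ 1) ∧
      (∀ w : EuclideanSpace ℝ (Fin M), ((∀ j, 0 ≤ w j) ∧ (∑ j, w j) ≤ 1) →
        ‖z - xstar‖ ≤ ‖z - w‖) ∧
      (∀ w : EuclideanSpace ℝ (Fin M), ((∀ j, 0 ≤ w j) ∧ (∑ j, w j) ≤ 1) →
        ‖z - w‖ = ‖z - xstar‖ → w = xstar) := by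
  intro x hx
  have hsum : (∑ j, x j) = ∑ j, max (z j - lam) 0 := by
    exact Finset.sum_congr rfl fun j _ => hx j
  -- variational inequality
  have hVI : ∀ w : EuclideanSpace ℝ (Fin M), (∀ j, 0 ≤ w j) → (∑ j, w j) ≤ 1 →
      (inner ℝ (z - x) (w - x) : ℝ) ≤ 0 := by
    intro w hw hwsum
    have hinner : (inner ℝ (z - x) (w - x) : ℝ) = ∑ j, (z j - x j) * (w j - x j) := by
      rw [PiLp.inner_apply]
      refine Finset.sum_congr rfl fun j _ => ?_
      simp [PiLp.sub_apply, RCLike.inner_apply, mul_comm]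
    rw [hinner]
    have hterm : ∀ j ∈ Finset.univ, (z j - x j) * (w j - x j) ≤ lam * (w j - x j) := by
      intro j _
      rcases le_or_gt lam (z j) with h | h
      · have : x j = z j - lam := by rw [hx j]; exact max_eq_left (by linarith)
        rw [this]; ring_nf; exact le_refl _
      · have hxj : x j = 0 := by rw [hx j]; exact max_eq_right (by linarith)
        rw [hxj]
        have := hw j
        nlinarith
    calc (∑ j, (z j - x j) * (w j - x j)) ≤ ∑ j, lam * (w j - x j) :=
          Finset.sum_le_sum hterm
      _ = lam * ((∑ j, w j) - ∑ j, x j) := by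
          rw [← Finset.mul_sum, Finset.sum_sub_distrib]
      _ ≤ 0 := by
          rw [hsum]
          rcases eq_or_lt_of_le hlam with h | h
          · rw [← h]; ring_nf; exact le_refl _
          · have : (∑ j, max (z j - lam) 0) = 1 := by
              rcases mul_eq_zero.mp hcomp with h0 | h0
              · exact absurd h0.symm (ne_of_lt h)
              · linarith
            rw [this]; nlinarith
  have hfeasx : (∀ j, 0 ≤ x j) ∧ (∑ j, x j) ≤ 1 := by
    constructor
    · intro j; rw [hx j]; exact le_max_right _ _
    · rw [hsum]; exact hfeas
  refine ⟨hfeasx, ?_, ?_⟩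
  · intro w ⟨hw1, hw2⟩
    have hVIw := hVI w hw1 hw2
    have hexp : ‖z - w‖ ^ 2 = ‖z - x‖ ^ 2 - 2 * (inner ℝ (z - x) (w - x) : ℝ) + ‖w - x‖ ^ 2 := by
      have : z - w = (z - x) - (w - x) := by abel
      rw [this, @norm_sub_sq_real]
    nlinarith [norm_nonneg (z - w), norm_nonneg (z - x), norm_nonneg (w - x), sq_nonneg (‖w - x‖)]
  · intro w ⟨hw1, hw2⟩ heq
    have hVIw := hVI w hw1 hw2
    have hexp : ‖z - w‖ ^ 2 = ‖z - x‖ ^ 2 - 2 * (inner ℝ (z - x) (w - x) : ℝ) + ‖w - x‖ ^ 2 := by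
      have : z - w = (z - x) - (w - x) := by abel
      rw [this, @norm_sub_sq_real]
    have hwx : ‖w - x‖ ^ 2 ≤ 0 := by
      rw [heq] at hexp; nlinarith
    have : w - x = 0 := by
      have := sq_nonneg ‖w - x‖
      have h0 : ‖w - x‖ = 0 := by nlinarith
      exact norm_eq_zero.mp h0
    exact sub_eq_zero.mp this
end
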